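/- For every integer n ≥ 4, the Dirichlet energy ∫_{ℝ^{n+1}_+} |∇W_{1,0}(x)|² dx is finite and positive, the weighted energy ∫_{ℝ^{n+1}_+} x_{n+1}² |∇W_{1,0}(x)|² dx is finite, and ∫_{ℝ^{n+1}_+} x_{n+1}² |∇W_{1,0}(x)|² dx = (2/((n−2)(n−3))) · ∫_{ℝ^{n+1}_+} |∇W_{1,0}(x)|² dx. (This is the case γ = 1/2 of the weighted-energy ratio ∫ x_N^{3−2γ}|∇W_{1,0}|² / ∫ x_N^{1−2γ}|∇W_{1,0}|² = 8(n−1)(1−γ)γ/((n−2)(n−2+2γ)(n−2−2γ)) entering the explicit value of the constant c¹_{n,γ}.) -/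

import Mathlib

open MeasureTheory Real Set

noncomputable section

/-- The standard bubble `W_{1,0}` for `γ = 1/2`, with `α_{n,1/2} = (n-1)^{(n-1)/2}`. -/
def bubbleW (n : ℕ) (x : Fin (n + 1) → ℝ) : ℝ :=
  ((n : ℝ) - 1) ^ (((n : ℝ) - 1) / 2) *
    ((1 + x (Fin.last n)) ^ 2 + ∑ i : Fin n, (x (Fin.castSucc i)) ^ 2) ^
      (-(((n : ℝ) - 1) / 2))

/-- The open upper half-space `ℝ^{n+1}_+`. -/
def upperHalf (n : ℕ) : Set (Fin (n + 1) → ℝ) := {x | 0 < x (Fin.last n)}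

/-- Squared length of the full Euclidean gradient. -/
def gradSq (n : ℕ) (f : (Fin (n + 1) → ℝ) → ℝ) (x : Fin (n + 1) → ℝ) : ℝ :=
  ∑ a : Fin (n + 1), (fderiv ℝ f x (Pi.single a 1)) ^ 2

namespace Stmt13
open Filter


def gfun (n : ℕ) (x : Fin (n + 1) → ℝ) : ℝ :=
  (1 + x (Fin.last n)) ^ 2 + ∑ i : Fin n, (x (Fin.castSucc i)) ^ 2

def Kc (n : ℕ) : ℝ := (((n : ℝ) - 1) ^ (((n : ℝ) - 1) / 2)) ^ 2 * ((n : ℝ) - 1) ^ 2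

lemma Kc_pos {n : ℕ} (hn : 4 ≤ n) : 0 < Kc n := by
  have h1 : (0:ℝ) < (n:ℝ) - 1 := by
    have : (4:ℝ) ≤ (n:ℝ) := by exact_mod_cast hn
    linarith
  have h2 : (0:ℝ) < ((n : ℝ) - 1) ^ (((n : ℝ) - 1) / 2) := rpow_pos_of_pos h1 _
  unfold Kc; positivity

lemma gfun_pos {n : ℕ} {x : Fin (n+1) → ℝ} (hx : 0 < x (Fin.last n)) : 0 < gfun n x := by
  have h0 : (0:ℝ) < 1 + x (Fin.last n) := by linarith
  have h1 : (0:ℝ) < (1 + x (Fin.last n)) ^ 2 := by positivity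
  have h2 : (0:ℝ) ≤ ∑ i : Fin n, (x (Fin.castSucc i)) ^ 2 :=
    Finset.sum_nonneg fun i _ => sq_nonneg _
  unfold gfun; linarith

lemma hasFDerivAt_gfun (n : ℕ) (x : Fin (n+1) → ℝ) :
    HasFDerivAt (gfun n)
      ((2 * (1 + x (Fin.last n))) • ContinuousLinearMap.proj (R := ℝ)
          (φ := fun _ : Fin (n+1) => ℝ) (Fin.last n)
        + ∑ i : Fin n, (2 * x (Fin.castSucc i)) • ContinuousLinearMap.proj (R := ℝ)
          (φ := fun _ : Fin (n+1) => ℝ) (Fin.castSucc i)) x := by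
  have hproj : ∀ a : Fin (n+1), HasFDerivAt (fun y : Fin (n+1) → ℝ => y a)
      (ContinuousLinearMap.proj (R := ℝ) (φ := fun _ : Fin (n+1) => ℝ) a) x :=
    fun a => hasFDerivAt_apply a x
  have h1 : HasFDerivAt (fun y : Fin (n+1) → ℝ => (1 + y (Fin.last n)) ^ 2)
      ((2 * (1 + x (Fin.last n))) • ContinuousLinearMap.proj (R := ℝ)
        (φ := fun _ : Fin (n+1) => ℝ) (Fin.last n)) x := by
    have hd : HasDerivAt (fun t : ℝ => (1 + t) ^ 2) (2 * (1 + x (Fin.last n)))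
        (x (Fin.last n)) := by
      simpa using ((hasDerivAt_id (x (Fin.last n))).const_add 1).fun_pow 2
    exact hd.comp_hasFDerivAt x (hproj (Fin.last n))
  have h2 : HasFDerivAt (fun y : Fin (n+1) → ℝ => ∑ i : Fin n, (y (Fin.castSucc i)) ^ 2)
      (∑ i : Fin n, (2 * x (Fin.castSucc i)) • ContinuousLinearMap.proj (R := ℝ)
        (φ := fun _ : Fin (n+1) => ℝ) (Fin.castSucc i)) x := by
    refine HasFDerivAt.fun_sum fun i _ => ?_
    have hd : HasDerivAt (fun t : ℝ => t ^ 2) (2 * x (Fin.castSucc i))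
        (x (Fin.castSucc i)) := by
      simpa using (hasDerivAt_id (x (Fin.castSucc i))).fun_pow 2
    exact hd.comp_hasFDerivAt x (hproj (Fin.castSucc i))
  exact h1.add h2


def Lmap (n : ℕ) (x : Fin (n+1) → ℝ) : (Fin (n+1) → ℝ) →L[ℝ] ℝ :=
  (2 * (1 + x (Fin.last n))) • ContinuousLinearMap.proj (R := ℝ)
      (φ := fun _ : Fin (n+1) => ℝ) (Fin.last n)
    + ∑ i : Fin n, (2 * x (Fin.castSucc i)) • ContinuousLinearMap.proj (R := ℝ)
      (φ := fun _ : Fin (n+1) => ℝ) (Fin.castSucc i)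

lemma Lmap_last (n : ℕ) (x : Fin (n+1) → ℝ) :
    Lmap n x (Pi.single (Fin.last n) 1) = 2 * (1 + x (Fin.last n)) := by
  unfold Lmap
  simp only [ContinuousLinearMap.add_apply, ContinuousLinearMap.smul_apply,
    ContinuousLinearMap.sum_apply, ContinuousLinearMap.proj_apply, smul_eq_mul]
  rw [Pi.single_eq_same]
  have hz : ∀ i : Fin n, (Pi.single (M := fun _ : Fin (n+1) => ℝ) (Fin.last n) 1)
      (Fin.castSucc i) = (0:ℝ) := fun i => Pi.single_eq_of_ne (Fin.castSucc_lt_last i).ne 1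
  simp [hz]

lemma Lmap_castSucc (n : ℕ) (x : Fin (n+1) → ℝ) (j : Fin n) :
    Lmap n x (Pi.single (Fin.castSucc j) 1) = 2 * x (Fin.castSucc j) := by
  unfold Lmap
  simp only [ContinuousLinearMap.add_apply, ContinuousLinearMap.smul_apply,
    ContinuousLinearMap.sum_apply, ContinuousLinearMap.proj_apply, smul_eq_mul]
  rw [Pi.single_eq_of_ne (Fin.castSucc_lt_last j).ne' 1]
  rw [Finset.sum_eq_single j]
  · rw [Pi.single_eq_same]; ring
  · intro i _ hij
    rw [Pi.single_eq_of_ne (fun h => hij (Fin.castSucc_injective n h)) 1]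
    ring
  · intro h; exact absurd (Finset.mem_univ j) h

lemma hasFDerivAt_bubbleW {n : ℕ} {x : Fin (n+1) → ℝ} (hx : 0 < x (Fin.last n)) :
    HasFDerivAt (bubbleW n)
      ((((n:ℝ)-1) ^ (((n:ℝ)-1)/2) *
        (-(((n:ℝ)-1)/2) * gfun n x ^ (-(((n:ℝ)-1)/2) - 1))) • Lmap n x) x := by
  have hg := gfun_pos hx
  have h1 : HasFDerivAt (fun y => gfun n y ^ (-(((n:ℝ)-1)/2)))
      ((-(((n:ℝ)-1)/2) * gfun n x ^ (-(((n:ℝ)-1)/2) - 1)) • Lmap n x) x :=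
    (hasFDerivAt_gfun n x).rpow_const (Or.inl hg.ne')
  have h2 := h1.const_mul (((n:ℝ)-1) ^ (((n:ℝ)-1)/2))
  rw [smul_smul] at h2
  exact h2

lemma gradSq_eq {n : ℕ} (hn : 4 ≤ n) {x : Fin (n+1) → ℝ} (hx : 0 < x (Fin.last n)) :
    gradSq n (bubbleW n) x = Kc n * ((gfun n x) ^ n)⁻¹ := by
  have hg := gfun_pos hx
  have hfd := (hasFDerivAt_bubbleW hx).fderiv
  set p : ℝ := ((n:ℝ)-1)/2 with hp
  set c : ℝ := ((n:ℝ)-1) ^ p with hc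
  set A : ℝ := c * (-p * gfun n x ^ (-p - 1)) with hA
  unfold gradSq
  rw [hfd]
  simp only [ContinuousLinearMap.coe_smul', Pi.smul_apply, smul_eq_mul]
  rw [Fin.sum_univ_castSucc]
  simp only [Lmap_castSucc, Lmap_last]
  have hsum : ∑ j : Fin n, (A * (2 * x (Fin.castSucc j)))^2
      = (4 * A^2) * ∑ j : Fin n, x (Fin.castSucc j)^2 := by
    rw [Finset.mul_sum]; exact Finset.sum_congr rfl fun j _ => by ring
  rw [hsum]
  have hAg : (4 * A^2) * ∑ j : Fin n, x (Fin.castSucc j)^2 + (A * (2 * (1 + x (Fin.last n))))^2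
      = 4 * A^2 * gfun n x := by unfold gfun; ring
  rw [hAg, hA]
  -- now: 4 * (c * (-p * g^(-p-1)))^2 * g = Kc n * (g^n)⁻¹
  have hsq : (gfun n x ^ (-p - 1))^2 * gfun n x = ((gfun n x) ^ n)⁻¹ := by
    rw [← rpow_natCast (gfun n x ^ (-p - 1)) 2, ← rpow_natCast (gfun n x) n,
      ← Real.rpow_mul hg.le]
    nth_rewrite 2 [← Real.rpow_one (gfun n x)]
    rw [← Real.rpow_add hg, ← Real.rpow_neg hg.le]
    congr 1
    have hn' : (4:ℝ) ≤ (n:ℝ) := by exact_mod_cast hn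
    push_cast
    rw [hp]; ring
  have expand : 4 * (c * (-p * gfun n x ^ (-p-1)))^2 * gfun n x
      = (c^2 * (2*p)^2) * ((gfun n x ^ (-p - 1))^2 * gfun n x) := by ring
  rw [expand, hsq]
  have h2p : 2 * p = (n:ℝ) - 1 := by rw [hp]; ring
  rw [h2p]
  rfl



lemma hasDerivAt_invpow (k : ℕ) {t : ℝ} (ht : 0 < 1 + t) :
    HasDerivAt (fun s : ℝ => ((1+s)^(k+1))⁻¹) (-(((k:ℝ)+1) * ((1+t)^(k+2))⁻¹)) t := by
  have h1 : HasDerivAt (fun s : ℝ => (1+s)^(k+1)) (((k:ℝ)+1) * (1+t)^k) t := by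
    have := ((hasDerivAt_id t).const_add 1).fun_pow (k+1)
    have hc : ((k+1 : ℕ) : ℝ) = (k:ℝ)+1 := by push_cast; ring
    simpa [hc] using this
  have h2 := h1.fun_inv (pow_ne_zero _ ht.ne')
  refine h2.congr_deriv ?_
  field_simp
  ring

lemma tendsto_invpow (k : ℕ) :
    Tendsto (fun t : ℝ => ((1+t)^(k+1))⁻¹) atTop (nhds 0) := by
  apply Tendsto.inv_tendsto_atTop
  apply Tendsto.comp (tendsto_pow_atTop (Nat.succ_ne_zero k))
  exact tendsto_atTop_add_const_left _ 1 tendsto_id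

lemma oneD_unweighted (m : ℕ) :
    IntegrableOn (fun t : ℝ => (((1+t) ^ (m+4) : ℝ))⁻¹) (Ioi 0) volume ∧
    ∫ t in Ioi (0:ℝ), ((1+t) ^ (m+4))⁻¹ = ((m:ℝ)+3)⁻¹ := by
  have hm3 : ((m:ℝ)+3) ≠ 0 := by positivity
  have hderiv : ∀ t ∈ Ici (0:ℝ),
      HasDerivAt (fun s : ℝ => -((m:ℝ)+3)⁻¹ * ((1+s)^(m+3))⁻¹) (((1+t)^(m+4))⁻¹) t := by
    intro t ht
    have ht' : (0:ℝ) < 1 + t := by simp at ht; linarith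
    have h := (hasDerivAt_invpow (m+2) ht').const_mul (-((m:ℝ)+3)⁻¹)
    have hD : -((m:ℝ)+3)⁻¹ * -(((↑(m+2):ℝ)+1) * ((1+t)^(m+2+2))⁻¹) = ((1+t)^(m+4))⁻¹ := by
      rw [show m+2+2 = m+4 from rfl]
      have h4 : ((1+t:ℝ)^(m+4)) ≠ 0 := pow_ne_zero _ ht'.ne'
      push_cast
      field_simp <;> ring
    rw [hD] at h
    simpa [show m+2+1 = m+3 from rfl] using h
  have hpos : ∀ t ∈ Ioi (0:ℝ), 0 ≤ ((1+t)^(m+4))⁻¹ := by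
    intro t ht
    simp at ht
    positivity
  have htend : Tendsto (fun t : ℝ => -((m:ℝ)+3)⁻¹ * ((1+t)^(m+3))⁻¹) atTop (nhds 0) := by
    have := (tendsto_invpow (m+2)).const_mul (-((m:ℝ)+3)⁻¹)
    simpa [show m+2+1 = m+3 from rfl] using this
  constructor
  · exact integrableOn_Ioi_deriv_of_nonneg' hderiv hpos htend
  · have := integral_Ioi_of_hasDerivAt_of_nonneg' hderiv hpos htend
    rw [this]
    norm_num

lemma oneD_weighted (m : ℕ) :
    IntegrableOn (fun t : ℝ => t^2 * (((1+t) ^ (m+4) : ℝ))⁻¹) (Ioi 0) volume ∧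
    ∫ t in Ioi (0:ℝ), t^2 * ((1+t) ^ (m+4))⁻¹
      = 2 / (((m:ℝ)+3) * ((m:ℝ)+2) * ((m:ℝ)+1)) := by
  have hm1 : ((m:ℝ)+1) ≠ 0 := by positivity
  have hm2 : ((m:ℝ)+2) ≠ 0 := by positivity
  have hm3 : ((m:ℝ)+3) ≠ 0 := by positivity
  set G : ℝ → ℝ := fun s =>
    -(((m:ℝ)+1)⁻¹ * ((1+s)^(m+1))⁻¹ - 2 * ((m:ℝ)+2)⁻¹ * ((1+s)^(m+2))⁻¹
      + ((m:ℝ)+3)⁻¹ * ((1+s)^(m+3))⁻¹) with hG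
  have hderiv : ∀ t ∈ Ici (0:ℝ), HasDerivAt G (t^2 * ((1+t)^(m+4))⁻¹) t := by
    intro t ht
    have ht' : (0:ℝ) < 1 + t := by simp at ht; linarith
    have h1 := (hasDerivAt_invpow m ht').const_mul (((m:ℝ)+1)⁻¹)
    have h2 := (hasDerivAt_invpow (m+1) ht').const_mul (2 * ((m:ℝ)+2)⁻¹)
    have h3 := (hasDerivAt_invpow (m+2) ht').const_mul (((m:ℝ)+3)⁻¹)
    have h := ((h1.fun_sub h2).fun_add h3).fun_neg
    have h' : HasDerivAt G
        (-(((m:ℝ)+1)⁻¹ * -(((m:ℝ)+1) * ((1+t)^(m+2))⁻¹)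
          - 2 * ((m:ℝ)+2)⁻¹ * -((↑(m+1):ℝ)+1) * ((1+t)^(m+1+2))⁻¹
          + ((m:ℝ)+3)⁻¹ * -((↑(m+2):ℝ)+1) * ((1+t)^(m+2+2))⁻¹)) t := by
      refine h.congr_deriv ?_
      push_cast
      ring
    convert h' using 1
    have e1 : (1+t)^(m+2) ≠ 0 := pow_ne_zero _ ht'.ne'
    have e2 : (1+t)^(m+1+2) ≠ 0 := pow_ne_zero _ ht'.ne'
    have e3 : (1+t)^(m+2+2) ≠ 0 := pow_ne_zero _ ht'.ne'
    have e4 : (1+t)^(m+4) ≠ 0 := pow_ne_zero _ ht'.ne'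
    push_cast
    field_simp
    ring
  have hpos : ∀ t ∈ Ioi (0:ℝ), 0 ≤ t^2 * ((1+t)^(m+4))⁻¹ := by
    intro t ht
    simp at ht
    positivity
  have htend : Tendsto G atTop (nhds 0) := by
    rw [hG]
    have h1 := (tendsto_invpow m).const_mul (((m:ℝ)+1)⁻¹)
    have h2 := (tendsto_invpow (m+1)).const_mul (2 * ((m:ℝ)+2)⁻¹)
    have h3 := (tendsto_invpow (m+2)).const_mul (((m:ℝ)+3)⁻¹)
    have := ((h1.sub h2).add h3).neg
    simpa using this
  constructor
  · exact integrableOn_Ioi_deriv_of_nonneg' hderiv hpos htend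
  · have := integral_Ioi_of_hasDerivAt_of_nonneg' hderiv hpos htend
    rw [this, hG]
    simp only [add_zero]
    norm_num
    field_simp
    ring



def baseC (n : ℕ) : ℝ := ∫ y : Fin n → ℝ, ((1 + ∑ i, (y i)^2) ^ n)⁻¹

lemma sumsq_nonneg {n : ℕ} (y : Fin n → ℝ) : (0:ℝ) ≤ ∑ i, (y i)^2 :=
  Finset.sum_nonneg fun i _ => sq_nonneg _

lemma norm_sq_le_sumsq {n : ℕ} (y : Fin n → ℝ) : ‖y‖^2 ≤ ∑ i, (y i)^2 := by
  have h1 : ‖y‖ ≤ Real.sqrt (∑ i, (y i)^2) := by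
    refine pi_norm_le_iff_of_nonneg (Real.sqrt_nonneg _) |>.2 fun i => ?_
    rw [Real.norm_eq_abs, ← Real.sqrt_sq_eq_abs]
    exact Real.sqrt_le_sqrt (Finset.single_le_sum (fun j _ => sq_nonneg (y j))
      (Finset.mem_univ i))
  calc ‖y‖^2 ≤ Real.sqrt (∑ i, (y i)^2) ^ 2 := by
        exact pow_le_pow_left₀ (norm_nonneg _) h1 2
    _ = ∑ i, (y i)^2 := Real.sq_sqrt (sumsq_nonneg y)

lemma base_cont (n : ℕ) {c : ℝ} (hc : 0 < c) :
    Continuous fun y : Fin n → ℝ => ((c + ∑ i, (y i)^2) ^ n)⁻¹ := by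
  apply Continuous.inv₀
  · fun_prop
  · intro y
    have := sumsq_nonneg y
    positivity

lemma base_integrable (n : ℕ) (hn : 1 ≤ n) :
    Integrable (fun y : Fin n → ℝ => ((1 + ∑ i, (y i)^2) ^ n)⁻¹) volume := by
  have hnr : ((Module.finrank ℝ (Fin n → ℝ) : ℝ)) < (2*n : ℝ) := by
    rw [Module.finrank_pi]
    simp only [Fintype.card_fin]
    have : (1:ℝ) ≤ (n:ℝ) := by exact_mod_cast hn
    linarith
  have hint := integrable_rpow_neg_one_add_norm_sq (E := Fin n → ℝ) (μ := volume) hnr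
  refine hint.mono' ((base_cont n one_pos).aestronglyMeasurable) ?_
  filter_upwards with y
  have h0 : (0:ℝ) ≤ ∑ i, (y i)^2 := sumsq_nonneg y
  have h1 : (0:ℝ) < (1 + ∑ i, (y i)^2)^n := by positivity
  rw [Real.norm_of_nonneg (by positivity)]
  have h2 : ((1:ℝ) + ‖y‖^2) ^ (-(2*(n:ℝ))/2) = (((1:ℝ) + ‖y‖^2) ^ n)⁻¹ := by
    rw [show (-(2*(n:ℝ))/2) = -(n:ℝ) by ring, Real.rpow_neg (by positivity),
      Real.rpow_natCast]
  rw [h2]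
  have h3 : ((1:ℝ) + ‖y‖^2) ^ n ≤ (1 + ∑ i, (y i)^2) ^ n :=
    pow_le_pow_left₀ (by positivity) (by linarith [norm_sq_le_sumsq y]) n
  exact inv_anti₀ (by positivity) h3

lemma baseC_pos (n : ℕ) (hn : 1 ≤ n) : 0 < baseC n := by
  rw [baseC]
  have hnn : 0 ≤ fun y : Fin n → ℝ => ((1 + ∑ i, (y i)^2)^n)⁻¹ := fun y => by
    have := sumsq_nonneg y; positivity
  rw [integral_pos_iff_support_of_nonneg hnn (base_integrable n hn)]
  have hsup : Function.support (fun y : Fin n → ℝ => ((1 + ∑ i, (y i)^2)^n)⁻¹) = univ :=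
    eq_univ_of_forall fun y => ne_of_gt (by have := sumsq_nonneg y; positivity)
  rw [hsup]
  exact isOpen_univ.measure_pos volume univ_nonempty


lemma slice_integrable (n : ℕ) (hn : 1 ≤ n) {a : ℝ} (ha : 0 < a) :
    Integrable (fun y : Fin n → ℝ => ((a^2 + ∑ i, (y i)^2) ^ n)⁻¹) volume := by
  have heq : (fun y : Fin n → ℝ => ((a^2 + ∑ i, (y i)^2) ^ n)⁻¹)
      = fun y : Fin n → ℝ => (a^(2*n))⁻¹ *
        ((1 + ∑ i, ((a⁻¹ • y) i)^2) ^ n)⁻¹ := by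
    funext y
    have hkey : (1:ℝ) + ∑ i, ((a⁻¹ • y) i)^2 = (a^2)⁻¹ * (a^2 + ∑ i, (y i)^2) := by
      simp only [Pi.smul_apply, smul_eq_mul, mul_pow, ← Finset.mul_sum, mul_add,
        inv_pow]
      rw [inv_mul_cancel₀ (pow_ne_zero 2 ha.ne')]
    rw [hkey, mul_pow, mul_inv, inv_pow, inv_inv, ← pow_mul, ← mul_assoc,
      inv_mul_cancel₀ (pow_ne_zero _ ha.ne'), one_mul]
  rw [heq]
  refine Integrable.const_mul ?_ _
  exact (integrable_comp_smul_iff volume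
    (fun y : Fin n → ℝ => ((1 + ∑ i, (y i)^2) ^ n)⁻¹)
    (inv_ne_zero ha.ne')).2 (base_integrable n hn)

lemma slice_value (n : ℕ) {a : ℝ} (ha : 0 < a) :
    ∫ y : Fin n → ℝ, ((a^2 + ∑ i, (y i)^2) ^ n)⁻¹ = (a ^ n)⁻¹ * baseC n := by
  have heq : (fun y : Fin n → ℝ => ((a^2 + ∑ i, (y i)^2) ^ n)⁻¹)
      = fun y : Fin n → ℝ => (a^(2*n))⁻¹ *
        ((1 + ∑ i, ((a⁻¹ • y) i)^2) ^ n)⁻¹ := by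
    funext y
    have hkey : (1:ℝ) + ∑ i, ((a⁻¹ • y) i)^2 = (a^2)⁻¹ * (a^2 + ∑ i, (y i)^2) := by
      simp only [Pi.smul_apply, smul_eq_mul, mul_pow, ← Finset.mul_sum, mul_add,
        inv_pow]
      rw [inv_mul_cancel₀ (pow_ne_zero 2 ha.ne')]
    rw [hkey, mul_pow, mul_inv, inv_pow, inv_inv, ← pow_mul, ← mul_assoc,
      inv_mul_cancel₀ (pow_ne_zero _ ha.ne'), one_mul]
  rw [heq]
  rw [integral_const_mul]
  have := MeasureTheory.Measure.integral_comp_smul (μ := volume)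
    (fun y : Fin n → ℝ => ((1 + ∑ i, (y i)^2) ^ n)⁻¹) a⁻¹
  rw [this, Module.finrank_pi, Fintype.card_fin, smul_eq_mul, ← baseC]
  rw [inv_pow, inv_inv, abs_of_pos (pow_pos ha n), ← mul_assoc]
  congr 1
  rw [two_mul, pow_add, mul_inv, mul_assoc, inv_mul_cancel₀ (pow_ne_zero _ ha.ne'),
    mul_one]











lemma prod_fubini (m : ℕ) (w : ℝ → ℝ) (hwc : Continuous w) (hw : ∀ t ∈ Ioi (0:ℝ), 0 ≤ w t)
    (hint : IntegrableOn (fun t : ℝ => w t * ((1+t)^(m+4))⁻¹) (Ioi 0) volume) :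
    Integrable (fun q : ℝ × (Fin (m+4) → ℝ) =>
        w q.1 * (((1 + q.1)^2 + ∑ i, (q.2 i)^2) ^ (m+4))⁻¹)
      ((volume.restrict (Ioi 0)).prod volume) ∧
    ∫ q : ℝ × (Fin (m+4) → ℝ), w q.1 * (((1 + q.1)^2 + ∑ i, (q.2 i)^2) ^ (m+4))⁻¹
        ∂((volume.restrict (Ioi 0)).prod volume)
      = baseC (m+4) * ∫ t in Ioi (0:ℝ), w t * ((1+t)^(m+4))⁻¹ := by
  set F : ℝ × (Fin (m+4) → ℝ) → ℝ :=
    fun q => w q.1 * (((1 + q.1)^2 + ∑ i, (q.2 i)^2) ^ (m+4))⁻¹ with hF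
  have hmeas : AEStronglyMeasurable F ((volume.restrict (Ioi 0)).prod volume) := by
    apply Measurable.aestronglyMeasurable
    apply Measurable.mul (hwc.measurable.comp measurable_fst)
    exact (Continuous.measurable (by fun_prop :
      Continuous fun q : ℝ × (Fin (m+4) → ℝ) => ((1 + q.1)^2 + ∑ i, (q.2 i)^2) ^ (m+4))).inv
  have hslice : ∀ t ∈ Ioi (0:ℝ), Integrable (fun y : Fin (m+4) → ℝ => F (t, y)) volume := by
    intro t ht
    have ht' : (0:ℝ) < 1 + t := by simp at ht; linarith
    exact (slice_integrable (m+4) (by omega) ht').const_mul (w t)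
  have hsliceval : ∀ t ∈ Ioi (0:ℝ),
      ∫ y : Fin (m+4) → ℝ, F (t, y) = w t * ((1+t)^(m+4))⁻¹ * baseC (m+4) := by
    intro t ht
    have ht' : (0:ℝ) < 1 + t := by simp at ht; linarith
    rw [hF]
    simp only
    rw [integral_const_mul, slice_value (m+4) ht', mul_assoc]
  have hnn : ∀ t ∈ Ioi (0:ℝ), ∀ y : Fin (m+4) → ℝ, 0 ≤ F (t, y) := by
    intro t ht y
    have h1 := hw t ht
    have h2 : (0:ℝ) ≤ (((1 + t)^2 + ∑ i, (y i)^2) ^ (m+4))⁻¹ := by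
      have ht' : (0:ℝ) < 1 + t := by simp at ht; linarith
      have := Finset.sum_nonneg fun i (_ : i ∈ Finset.univ) => sq_nonneg (y i)
      positivity
    exact mul_nonneg h1 h2
  have hInt2 : Integrable (fun t => ∫ y : Fin (m+4) → ℝ, ‖F (t, y)‖)
      (volume.restrict (Ioi 0)) := by
    refine (hint.mul_const (baseC (m+4))).congr ?_
    rw [EventuallyEq, ae_restrict_iff' measurableSet_Ioi]
    filter_upwards with t ht
    have : ∀ y : Fin (m+4) → ℝ, ‖F (t, y)‖ = F (t, y) := fun y =>
      Real.norm_of_nonneg (hnn t ht y)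
    simp_rw [this]
    rw [hsliceval t ht]
  have hFint : Integrable F ((volume.restrict (Ioi 0)).prod volume) := by
    rw [integrable_prod_iff hmeas]
    exact ⟨(ae_restrict_iff' measurableSet_Ioi).2 (ae_of_all _ hslice), hInt2⟩
  refine ⟨hFint, ?_⟩
  rw [integral_prod _ hFint]
  rw [setIntegral_congr_fun measurableSet_Ioi (fun t ht => hsliceval t ht)]
  rw [integral_mul_const, mul_comm]


end Stmt13

open Stmt13 Filter

/-- For `n ≥ 4`, the Dirichlet energy of the bubble is finite and positive, the
`x_{n+1}²`-weighted energy is finite, and their ratio is `2/((n-2)(n-3))`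
(the case `γ = 1/2` of the weighted-energy ratio entering `c¹_{n,γ}`). -/
theorem statement13 :
    ∀ n : ℕ, 4 ≤ n →
      IntegrableOn (fun x => gradSq n (bubbleW n) x) (upperHalf n) volume ∧
      0 < (∫ x in upperHalf n, gradSq n (bubbleW n) x) ∧
      IntegrableOn (fun x => (x (Fin.last n)) ^ 2 * gradSq n (bubbleW n) x)
        (upperHalf n) volume ∧
      (∫ x in upperHalf n, (x (Fin.last n)) ^ 2 * gradSq n (bubbleW n) x) =
        (2 / (((n : ℝ) - 2) * ((n : ℝ) - 3))) * ∫ x in upperHalf n, gradSq n (bubbleW n) x := by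
  intro n hn
  obtain ⟨m, rfl⟩ : ∃ m, n = m + 4 := ⟨n - 4, by omega⟩
  have hKpos : 0 < Kc (m+4) := Kc_pos (by omega)
  have hCpos : 0 < baseC (m+4) := baseC_pos (m+4) (by omega)
  have hmp := volume_preserving_piFinSuccAbove (fun _ : Fin (m+4+1) => ℝ) (Fin.last (m+4))
  set e := MeasurableEquiv.piFinSuccAbove (fun _ : Fin (m+4+1) => ℝ) (Fin.last (m+4)) with he
  have hemb := e.measurableEmbedding
  set S : Set (ℝ × (Fin (m+4) → ℝ)) := (Ioi 0) ×ˢ (univ : Set (Fin (m+4) → ℝ)) with hSdef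
  have heapp : ∀ x : Fin (m+4+1) → ℝ,
      e x = (x (Fin.last (m+4)), fun j => x (Fin.castSucc j)) := by
    intro x; rw [he]
    simp [MeasurableEquiv.piFinSuccAbove, Fin.succAbove_last]; rfl
  have hpre : upperHalf (m+4) = e ⁻¹' S := by
    ext x
    simp only [upperHalf, mem_setOf_eq, mem_preimage, heapp, hSdef, mem_prod, mem_Ioi,
      mem_univ, and_true]
  have hpreMeas : MeasurableSet (e ⁻¹' S) :=
    e.measurable (measurableSet_Ioi.prod MeasurableSet.univ)
  have hrestr : (volume : Measure (ℝ × (Fin (m+4) → ℝ))).restrict S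
      = (volume.restrict (Ioi 0)).prod volume := by
    rw [hSdef, Measure.volume_eq_prod, ← Measure.prod_restrict, Measure.restrict_univ]
  -- product-side functions
  set G1 : ℝ × (Fin (m+4) → ℝ) → ℝ :=
    fun q => Kc (m+4) * (((1 + q.1)^2 + ∑ i, (q.2 i)^2) ^ (m+4))⁻¹ with hG1
  set G2 : ℝ × (Fin (m+4) → ℝ) → ℝ :=
    fun q => (Kc (m+4) * q.1^2) * (((1 + q.1)^2 + ∑ i, (q.2 i)^2) ^ (m+4))⁻¹ with hG2
  have P1 := prod_fubini m (fun _ => Kc (m+4)) continuous_const (fun t _ => hKpos.le)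
    ((oneD_unweighted m).1.const_mul _)
  have P2 := prod_fubini m (fun t => Kc (m+4) * t^2)
    (continuous_const.mul (continuous_pow 2))
    (fun t _ => by positivity)
    (((oneD_weighted m).1.const_mul (Kc (m+4))).congr (ae_of_all _ fun t => by ring))
  have hval1 : ∫ t in Ioi (0:ℝ), Kc (m+4) * ((1+t)^(m+4))⁻¹
      = Kc (m+4) * ((m:ℝ)+3)⁻¹ := by
    rw [integral_const_mul, (oneD_unweighted m).2]
  have hval2 : ∫ t in Ioi (0:ℝ), (Kc (m+4) * t^2) * ((1+t)^(m+4))⁻¹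
      = Kc (m+4) * (2 / (((m:ℝ)+3) * ((m:ℝ)+2) * ((m:ℝ)+1))) := by
    have : ∀ t : ℝ, (Kc (m+4) * t^2) * ((1+t)^(m+4))⁻¹
        = Kc (m+4) * (t^2 * ((1+t)^(m+4))⁻¹) := fun t => by ring
    simp_rw [this]
    rw [integral_const_mul, (oneD_weighted m).2]
  -- pointwise identification on the half-space
  have hEq1 : EqOn (G1 ∘ e) (fun x => gradSq (m+4) (bubbleW (m+4)) x) (e ⁻¹' S) := by
    intro x hx
    rw [← hpre] at hx
    have hx' : 0 < x (Fin.last (m+4)) := hx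
    simp only [Function.comp_apply, heapp, hG1]
    rw [gradSq_eq (by omega) hx']
    simp only [gfun]
  have hEq2 : EqOn (G2 ∘ e)
      (fun x => (x (Fin.last (m+4)))^2 * gradSq (m+4) (bubbleW (m+4)) x) (e ⁻¹' S) := by
    intro x hx
    rw [← hpre] at hx
    have hx' : 0 < x (Fin.last (m+4)) := hx
    simp only [Function.comp_apply, heapp, hG2]
    rw [gradSq_eq (by omega) hx']
    simp only [gfun]
    ring
  -- integrability
  have hIntG1 : IntegrableOn G1 S volume := by
    rw [IntegrableOn, hrestr]; exact P1.1
  have hIntG2 : IntegrableOn G2 S volume := by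
    rw [IntegrableOn, hrestr]; exact P2.1
  have hIOn1 : IntegrableOn (fun x => gradSq (m+4) (bubbleW (m+4)) x)
      (upperHalf (m+4)) volume := by
    rw [hpre]
    exact (((hmp.integrableOn_comp_preimage hemb).2 hIntG1).congr_fun hEq1 hpreMeas)
  have hIOn2 : IntegrableOn (fun x => (x (Fin.last (m+4)))^2 * gradSq (m+4) (bubbleW (m+4)) x)
      (upperHalf (m+4)) volume := by
    rw [hpre]
    exact (((hmp.integrableOn_comp_preimage hemb).2 hIntG2).congr_fun hEq2 hpreMeas)
  -- values
  have hI1 : ∫ x in upperHalf (m+4), gradSq (m+4) (bubbleW (m+4)) x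
      = baseC (m+4) * (Kc (m+4) * ((m:ℝ)+3)⁻¹) := by
    rw [hpre, ← setIntegral_congr_fun hpreMeas hEq1]
    have := hmp.setIntegral_preimage_emb hemb G1 S
    rw [show (fun x => (G1 ∘ e) x) = fun x => G1 (e x) from rfl, this, hrestr, P1.2, hval1]
  have hI2 : ∫ x in upperHalf (m+4), (x (Fin.last (m+4)))^2 * gradSq (m+4) (bubbleW (m+4)) x
      = baseC (m+4) * (Kc (m+4) * (2 / (((m:ℝ)+3) * ((m:ℝ)+2) * ((m:ℝ)+1)))) := by
    rw [hpre, ← setIntegral_congr_fun hpreMeas hEq2]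
    have := hmp.setIntegral_preimage_emb hemb G2 S
    rw [show (fun x => (G2 ∘ e) x) = fun x => G2 (e x) from rfl, this, hrestr, P2.2, hval2]
  refine ⟨hIOn1, ?_, hIOn2, ?_⟩
  · rw [hI1]; positivity
  · rw [hI1, hI2]
    have hc2 : ((m+4:ℕ):ℝ) - 2 = (m:ℝ) + 2 := by push_cast; ring
    have hc3 : ((m+4:ℕ):ℝ) - 3 = (m:ℝ) + 1 := by push_cast; ring
    rw [hc2, hc3]
    have h1 : ((m:ℝ)+1) ≠ 0 := by positivity
    have h2 : ((m:ℝ)+2) ≠ 0 := by positivity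
    have h3 : ((m:ℝ)+3) ≠ 0 := by positivity
    field_simp
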